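/- Monotonicity of horizon area along an adiabatic Kerr sequence: let M(t) > 0, J(t) be differentiable with J(t)² < M(t)⁴ for all t, and suppose dM/dt ≥ Ω_H(t)·dJ/dt where Ω_H = a/(r₊²+a²), a = J/M, r₊ = M + √(M²-a²). Then t ↦ M_irr(t)² = (M(t)² + √(M(t)⁴ - J(t)²))/2 is nondecreasing. -/

import Mathlib

/-- Monotonicity of M_irr² along an adiabatic Kerr sequence with
    dM/dt ≥ Ω_H dJ/dt. -/
theorem irreducible_mass_monotone
    (I : Set ℝ) (hI : Convex ℝ I)
    (M J M' J' : ℝ → ℝ)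
    (hMd : ∀ t ∈ I, HasDerivAt M (M' t) t)
    (hJd : ∀ t ∈ I, HasDerivAt J (J' t) t)
    (hMpos : ∀ t ∈ I, 0 < M t)
    (hJM : ∀ t ∈ I, (J t)^2 < (M t)^4)
    (a rp ΩH : ℝ → ℝ)
    (ha : ∀ t, a t = J t / M t)
    (hrp : ∀ t, rp t = M t + Real.sqrt ((M t)^2 - (a t)^2))
    (hΩH : ∀ t, ΩH t = a t / ((rp t)^2 + (a t)^2))
    (hrate : ∀ t ∈ I, ΩH t * J' t ≤ M' t) :
    MonotoneOn (fun t => ((M t)^2 + Real.sqrt ((M t)^4 - (J t)^2)) / 2) I := by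
  set f : ℝ → ℝ := fun t => ((M t)^2 + Real.sqrt ((M t)^4 - (J t)^2)) / 2 with hf
  have key : ∀ t ∈ I, HasDerivAt f
      ((2 * M t * M' t + (4*(M t)^3*M' t - 2*J t*J' t) / (2 * Real.sqrt ((M t)^4 - (J t)^2))) / 2) t
      ∧ 0 ≤ (2 * M t * M' t + (4*(M t)^3*M' t - 2*J t*J' t) / (2 * Real.sqrt ((M t)^4 - (J t)^2))) / 2 := by
    intro t ht
    have hMp := hMpos t ht
    have hg : (0:ℝ) < (M t)^4 - (J t)^2 := by linarith [hJM t ht]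
    set s := Real.sqrt ((M t)^4 - (J t)^2) with hs
    have hspos : 0 < s := Real.sqrt_pos.mpr hg
    have hssq : s^2 = (M t)^4 - (J t)^2 := Real.sq_sqrt hg.le
    -- derivative
    have hg' : HasDerivAt (fun u => (M u)^4 - (J u)^2)
        (4*(M t)^3*M' t - 2*J t*J' t) t := by
      have h1 := (hMd t ht).pow 4
      have h2 := (hJd t ht).pow 2
      have := h1.sub h2
      refine this.congr_deriv ?_
      push_cast
      ring
    have hsq : HasDerivAt (fun u => Real.sqrt ((M u)^4 - (J u)^2))
        ((4*(M t)^3*M' t - 2*J t*J' t) / (2 * s)) t := hg'.sqrt (ne_of_gt hg)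
    have hM2 : HasDerivAt (fun u => (M u)^2) (2 * M t * M' t) t := by
      have := (hMd t ht).pow 2
      refine this.congr_deriv ?_
      push_cast; ring
    have hd : HasDerivAt f
        ((2 * M t * M' t + (4*(M t)^3*M' t - 2*J t*J' t) / (2 * s)) / 2) t :=
      (hM2.add hsq).div_const 2
    refine ⟨hd, ?_⟩
    -- nonnegativity
    have hΩval : ΩH t = J t / (2 * M t * ((M t)^2 + s)) := by
      have hMa : (M t)^2 - (a t)^2 = ((M t)^4 - (J t)^2) / (M t)^2 := by
        rw [ha]; field_simp
      have hsqrt : Real.sqrt ((M t)^2 - (a t)^2) = s / M t := by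
        rw [hMa, hs, Real.sqrt_div hg.le, Real.sqrt_sq hMp.le]
      rw [hΩH, hrp, hsqrt, ha]
      have h1 : (M t + s / M t)^2 + (J t / M t)^2 = (2 * ((M t)^2 + s) * (M t)^2 + (s^2 + (J t)^2 - (M t)^4)) / (M t)^2 := by
        field_simp; ring
      rw [h1, hssq]
      have : (2 * ((M t)^2 + s) * (M t)^2 + ((M t)^4 - (J t)^2 + (J t)^2 - (M t)^4)) = 2 * ((M t)^2 + s) * (M t)^2 := by ring
      rw [this]
      have hden : (0:ℝ) < 2 * ((M t)^2 + s) := by positivity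
      field_simp
    have hr := hrate t ht
    rw [hΩval] at hr
    have hden : (0:ℝ) < 2 * M t * ((M t)^2 + s) := by positivity
    have hJJ' : J t * J' t ≤ 2 * M t * ((M t)^2 + s) * M' t := by
      rw [div_mul_eq_mul_div, div_le_iff₀ hden] at hr
      nlinarith [hr]
    have hnum : 0 ≤ 2 * M t * M' t * (2 * s) + (4*(M t)^3*M' t - 2*J t*J' t) := by
      nlinarith [hJJ']
    have h2s : (0:ℝ) < 2 * s := by linarith
    have : 0 ≤ 2 * M t * M' t + (4*(M t)^3*M' t - 2*J t*J' t) / (2 * s) := by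
      have h := div_nonneg hnum h2s.le
      calc (0:ℝ) ≤ (2 * M t * M' t * (2 * s) + (4*(M t)^3*M' t - 2*J t*J' t)) / (2 * s) := h
        _ = 2 * M t * M' t + (4*(M t)^3*M' t - 2*J t*J' t) / (2 * s) := by
            field_simp
    linarith
  apply monotoneOn_of_deriv_nonneg hI
  · intro t ht
    exact ((key t ht).1).continuousAt.continuousWithinAt
  · intro t ht
    exact ((key t (interior_subset ht)).1).differentiableAt.differentiableWithinAt
  · intro t ht
    rw [((key t (interior_subset ht)).1).deriv]
    exact (key t (interior_subset ht)).2
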